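/- arXiv:2409.08342 — 3 statements merged into one kernel-verified Lean document; each statement's English description precedes it below -/
import Mathlib

section
/- There exist integers k, n ≥ 2 such that C_c(k,n) is a proper subset of C_q(k,n); that is, there is a quantum correlation that is not a classical correlation (Bell's theorem). -/
open Matrix
open scoped Kronecker ComplexOrder

noncomputable section

/-- A POVM of length `n` on the finite-dimensional Hilbert space `ℂ^d` (with operators
given by matrices): a tuple of positive semidefinite matrices summing to the identity. -/
def IsMatPOVM {d n : ℕ} (A : Fin n → Matrix (Fin d) (Fin d) ℂ) : Prop :=
  (∀ i, (A i).PosSemidef) ∧ ∑ i, A i = 1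

/-- The set `C_q(k,n)` of quantum correlations, as a subset of `ℝ^{k²n²}`:
correlations `p(a,b|x,y) = ⟨(A^x_a ⊗ B^y_b)ξ, ξ⟩` arising from POVMs `A^x` and `B^y` of
length `n` on finite-dimensional Hilbert spaces `H_A`, `H_B` (of arbitrary dimensions)
and a unit vector `ξ ∈ H_A ⊗ H_B`; the tensor product of operators is the Kronecker
product of matrices. -/
def QCorr (k n : ℕ) : Set (Fin k → Fin k → Fin n → Fin n → ℝ) :=
  { p | ∃ (dA dB : ℕ)
      (A : Fin k → Fin n → Matrix (Fin dA) (Fin dA) ℂ)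
      (B : Fin k → Fin n → Matrix (Fin dB) (Fin dB) ℂ)
      (ξ : Fin dA × Fin dB → ℂ),
      (∀ x, IsMatPOVM (A x)) ∧ (∀ y, IsMatPOVM (B y)) ∧
      star ξ ⬝ᵥ ξ = 1 ∧
      ∀ x y a b, (p x y a b : ℂ) = star ξ ⬝ᵥ ((A x a ⊗ₖ B y b) *ᵥ ξ) }

/-- The deterministic correlation determined by answer functions `A B : [k] → [n]`. -/
def detCorr {k n : ℕ} (A B : Fin k → Fin n) : Fin k → Fin k → Fin n → Fin n → ℝ :=
  fun x y a b => if A x = a ∧ B y = b then 1 else 0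

/-- The set `C_c(k,n)` of classical correlations: the convex hull (in `ℝ^{k²n²}`) of the
deterministic correlations. -/
def CCorr (k n : ℕ) : Set (Fin k → Fin k → Fin n → Fin n → ℝ) :=
  convexHull ℝ { p | ∃ A B : Fin k → Fin n, p = detCorr A B }

/-! ### Auxiliary lemmas -/

/-- PSD of nonneg scalar multiple of an outer product. -/
lemma psd_of_eq {d : ℕ} (M : Matrix (Fin d) (Fin d) ℂ) (u : Fin d → ℂ) (r : ℝ) (hr : 0 ≤ r)
    (h : M = (r : ℂ) • Matrix.vecMulVec u (star u)) : M.PosSemidef := by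
  subst h
  refine Matrix.PosSemidef.of_dotProduct_mulVec_nonneg ?_ ?_
  · ext i j
    simp [Matrix.conjTranspose_apply, Matrix.vecMulVec_apply, Complex.conj_ofReal, mul_comm]
  · intro x
    have h1 : star x ⬝ᵥ (((r : ℂ) • Matrix.vecMulVec u (star u)) *ᵥ x)
        = (r : ℂ) * ((∑ i, star (x i) * u i) * (∑ j, star (u j) * x j)) := by
      simp only [Matrix.mulVec, dotProduct, Matrix.vecMulVec_apply, Matrix.smul_apply,
        smul_eq_mul, Pi.star_apply, Finset.mul_sum]
      simp only [Finset.mul_sum, Finset.sum_mul]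
      rw [Finset.sum_comm]
      apply Finset.sum_congr rfl; intro i _
      apply Finset.sum_congr rfl; intro j _
      ring
    have h2 : (∑ i, star (x i) * u i) = star (∑ j, star (u j) * x j) := by
      rw [star_sum]
      apply Finset.sum_congr rfl; intro j _
      simp [star_mul', mul_comm]
    rw [h1, h2]
    exact mul_nonneg (by exact_mod_cast Complex.zero_le_real.mpr hr) (star_mul_self_nonneg _)

/-- Dot product computation for diagonal kronecker with a "diagonal" vector. -/
lemma diag_corr {m : ℕ} (dA dB : Fin m → ℂ) (c : Fin m → ℂ)
    (ξ : Fin m × Fin m → ℂ) (hξ : ξ = fun ij => if ij.1 = ij.2 then c ij.1 else 0) :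
    star ξ ⬝ᵥ ((Matrix.diagonal dA ⊗ₖ Matrix.diagonal dB) *ᵥ ξ)
      = ∑ i, star (c i) * (dA i * dB i * c i) := by
  subst hξ
  simp [dotProduct, Matrix.mulVec, Fintype.sum_prod_type, Matrix.kroneckerMap_apply,
    Matrix.diagonal_apply, mul_ite, ite_mul, mul_zero, zero_mul, apply_ite,
    Finset.sum_ite_eq, Finset.sum_ite_eq']

lemma diag_norm {m : ℕ} (c : Fin m → ℂ)
    (ξ : Fin m × Fin m → ℂ) (hξ : ξ = fun ij => if ij.1 = ij.2 then c ij.1 else 0) :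
    star ξ ⬝ᵥ ξ = ∑ i, star (c i) * c i := by
  subst hξ
  simp [dotProduct, Fintype.sum_prod_type, mul_ite, ite_mul, mul_zero, zero_mul, apply_ite,
    Finset.sum_ite_eq, Finset.sum_ite_eq']


lemma ccorr_subset_qcorr : CCorr 2 2 ⊆ QCorr 2 2 := by
  intro p hp
  rw [CCorr, convexHull_eq] at hp
  obtain ⟨ι, t, w, z, hw0, hw1, hz, hc⟩ := hp
  have hz' : ∀ i : ι, ∃ AB : (Fin 2 → Fin 2) × (Fin 2 → Fin 2),
      i ∈ t → z i = detCorr AB.1 AB.2 := by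
    intro i
    by_cases hi : i ∈ t
    · obtain ⟨A, B, h⟩ := hz i hi
      exact ⟨(A, B), fun _ => h⟩
    · exact ⟨⟨fun _ => 0, fun _ => 0⟩, fun h => absurd h hi⟩
  choose F hF using hz'
  set m := Fintype.card ↥t with hm
  set e : Fin m ≃ ↥t := (Fintype.equivFin ↥t).symm with he
  set c : Fin m → ℂ := fun i => ((Real.sqrt (w (e i : ι)) : ℝ) : ℂ) with hcdef
  have hstarc : ∀ i, star (c i) = c i := fun i => Complex.conj_ofReal _
  have hcc : ∀ i, star (c i) * c i = ((w (e i : ι) : ℝ) : ℂ) := by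
    intro i
    rw [hstarc, hcdef, ← Complex.ofReal_mul, Real.mul_self_sqrt (hw0 _ (e i).2)]
  refine ⟨m, m,
    fun x a => Matrix.diagonal (fun i => if (F (e i : ι)).1 x = a then 1 else 0),
    fun y b => Matrix.diagonal (fun i => if (F (e i : ι)).2 y = b then 1 else 0),
    fun ij => if ij.1 = ij.2 then c ij.1 else 0, ?_, ?_, ?_, ?_⟩
  · intro x
    constructor
    · intro a
      rw [Matrix.posSemidef_diagonal_iff]
      intro i
      split <;> norm_num
    · ext i j
      by_cases h : i = j <;>
        simp [Matrix.sum_apply, Matrix.diagonal_apply, Matrix.one_apply, h, Finset.sum_ite_eq']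
  · intro y
    constructor
    · intro b
      rw [Matrix.posSemidef_diagonal_iff]
      intro i
      split <;> norm_num
    · ext i j
      by_cases h : i = j <;>
        simp [Matrix.sum_apply, Matrix.diagonal_apply, Matrix.one_apply, h, Finset.sum_ite_eq']
  · rw [diag_norm c _ rfl]
    have : ∑ i, star (c i) * c i = ∑ i : Fin m, ((w (e i : ι) : ℝ) : ℂ) := by
      exact Finset.sum_congr rfl fun i _ => hcc i
    rw [this, Equiv.sum_comp e (fun s : ↥t => ((w (s : ι) : ℝ) : ℂ))]
    rw [← Complex.ofReal_sum, Finset.sum_coe_sort t (fun i => w i), hw1, Complex.ofReal_one]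
  · intro x y a b
    rw [diag_corr _ _ c _ rfl]
    have hterm : ∀ i : Fin m,
        star (c i) * ((if (F (e i : ι)).1 x = a then (1:ℂ) else 0) *
          (if (F (e i : ι)).2 y = b then (1:ℂ) else 0) * c i)
        = ((w (e i : ι) * detCorr (F (e i : ι)).1 (F (e i : ι)).2 x y a b : ℝ) : ℂ) := by
      intro i
      rw [detCorr]
      push_cast
      rcases Decidable.em ((F (e i : ι)).1 x = a) with h1 | h1 <;>
        rcases Decidable.em ((F (e i : ι)).2 y = b) with h2 | h2 <;>
        simp [h1, h2, hcdef, Complex.conj_ofReal] <;>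
        rw [← Complex.ofReal_mul, Real.mul_self_sqrt (hw0 _ (e i).2)]
    rw [Finset.sum_congr rfl fun i _ => hterm i]
    rw [Equiv.sum_comp e
      (fun s : ↥t => ((w (s : ι) * detCorr (F (s : ι)).1 (F (s : ι)).2 x y a b : ℝ) : ℂ))]
    rw [← Complex.ofReal_sum]
    norm_cast
    rw [Finset.sum_coe_sort t (fun i => w i * detCorr (F i).1 (F i).2 x y a b)]
    have hp' : p = ∑ i ∈ t, w i • z i := by
      rw [← hc, Finset.centerMass_eq_of_sum_1 _ _ hw1]
    have hpx : p x y a b = ∑ i ∈ t, w i * z i x y a b := by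
      rw [hp']
      simp [Finset.sum_apply]
    rw [hpx]
    apply Finset.sum_congr rfl
    intro i hi
    rw [hF i hi]


/-! ### The CHSH quantum correlation -/

def Efn (p : Fin 2 → Fin 2 → Fin 2 → Fin 2 → ℝ) (x y : Fin 2) : ℝ :=
  p x y 0 0 + p x y 1 1 - p x y 0 1 - p x y 1 0

def chsh (p : Fin 2 → Fin 2 → Fin 2 → Fin 2 → ℝ) : ℝ :=
  Efn p 0 0 + Efn p 0 1 + Efn p 1 0 - Efn p 1 1

lemma chsh_det_le (A B : Fin 2 → Fin 2) : chsh (detCorr A B) ≤ 2 := by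
  have h2 : ∀ i : Fin 2, i = 0 ∨ i = 1 := by decide
  rcases h2 (A 0) with hA0 | hA0 <;> rcases h2 (A 1) with hA1 | hA1 <;>
    rcases h2 (B 0) with hB0 | hB0 <;> rcases h2 (B 1) with hB1 | hB1 <;>
    norm_num [chsh, Efn, detCorr, hA0, hA1, hB0, hB1]

lemma chsh_ccorr_le {p : Fin 2 → Fin 2 → Fin 2 → Fin 2 → ℝ} (hp : p ∈ CCorr 2 2) :
    chsh p ≤ 2 := by
  have hsub : CCorr 2 2 ⊆ {q | chsh q ≤ 2} := by
    apply convexHull_min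
    · rintro q ⟨A, B, rfl⟩
      exact chsh_det_le A B
    · intro q hq r hr a b ha hb hab
      have hlin : chsh (a • q + b • r) = a * chsh q + b * chsh r := by
        simp only [chsh, Efn, Pi.add_apply, Pi.smul_apply, smul_eq_mul]
        ring
      have hq' : chsh q ≤ 2 := hq
      have hr' : chsh r ≤ 2 := hr
      have : a * chsh q + b * chsh r ≤ 2 := by
        nlinarith [mul_le_mul_of_nonneg_left hq' ha, mul_le_mul_of_nonneg_left hr' hb]
      simpa [hlin] using this
  exact hsub hp

def pQ : Fin 2 → Fin 2 → Fin 2 → Fin 2 → ℝ := fun x y a b =>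
  if x = 1 then
    (if y = 1 then (if a = b then 1/10 else 2/5) else (if a = b then 2/5 else 1/10))
  else (if a = b then 9/20 else 1/20)

lemma chsh_pQ : chsh pQ = 14/5 := by
  norm_num [chsh, Efn, pQ]

def AliceM : Fin 2 → Fin 2 → Matrix (Fin 2) (Fin 2) ℂ := fun x a =>
  if x = 0 then (if a = 0 then !![1,0;0,0] else !![0,0;0,1])
  else (if a = 0 then !![1/2,1/2;1/2,1/2] else !![1/2,-(1/2);-(1/2),1/2])

def BobM : Fin 2 → Fin 2 → Matrix (Fin 2) (Fin 2) ℂ := fun y b =>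
  if y = 0 then (if b = 0 then !![9/10,3/10;3/10,1/10] else !![1/10,-(3/10);-(3/10),9/10])
  else (if b = 0 then !![9/10,-(3/10);-(3/10),1/10] else !![1/10,3/10;3/10,9/10])

def bellVec : Fin 2 × Fin 2 → ℂ := fun ij =>
  if ij.1 = ij.2 then (((Real.sqrt 2)⁻¹ : ℝ) : ℂ) else 0

lemma bell_sq : (((Real.sqrt 2)⁻¹ : ℝ) : ℂ) * (((Real.sqrt 2)⁻¹ : ℝ) : ℂ) = 1/2 := by
  rw [← Complex.ofReal_mul, ← mul_inv, Real.mul_self_sqrt (by norm_num : (0:ℝ) ≤ 2)]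
  norm_num

lemma bellVec_norm : star bellVec ⬝ᵥ bellVec = 1 := by
  simp [bellVec, dotProduct, Fintype.sum_prod_type, Fin.sum_univ_two, Complex.conj_ofReal]
  rw [← mul_inv, ← Complex.ofReal_mul, Real.mul_self_sqrt (by norm_num : (0:ℝ) ≤ 2)]
  norm_num

lemma bell_corr (A B : Matrix (Fin 2) (Fin 2) ℂ) :
    star bellVec ⬝ᵥ ((A ⊗ₖ B) *ᵥ bellVec) =
      (A 0 0 * B 0 0 + A 0 1 * B 0 1 + A 1 0 * B 1 0 + A 1 1 * B 1 1) / 2 := by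
  have h : ((Real.sqrt 2 : ℝ) : ℂ)⁻¹ * ((Real.sqrt 2 : ℝ) : ℂ)⁻¹ = 1/2 := by
    rw [← mul_inv, ← Complex.ofReal_mul, Real.mul_self_sqrt (by norm_num : (0:ℝ) ≤ 2)]
    norm_num
  simp only [bellVec, dotProduct, Matrix.mulVec, Fintype.sum_prod_type, Fin.sum_univ_two,
    Matrix.kroneckerMap_apply, Pi.star_apply, apply_ite (star : ℂ → ℂ), Complex.star_def,
    Complex.conj_ofReal, map_inv₀, map_zero, mul_ite, ite_mul, mul_zero, zero_mul, Complex.ofReal_inv]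
  simp only [if_true, if_neg (by decide : ¬ (0 : Fin 2) = 1), if_neg (by decide : ¬ (1 : Fin 2) = 0),
    if_pos rfl, zero_add, add_zero, zero_mul, mul_zero]
  push_cast at h ⊢
  linear_combination (A 0 0 * B 0 0 + A 0 1 * B 0 1 + A 1 0 * B 1 0 + A 1 1 * B 1 1) * h

lemma pQ_mem_qcorr : pQ ∈ QCorr 2 2 := by
  refine ⟨2, 2, AliceM, BobM, bellVec, ?_, ?_, bellVec_norm, ?_⟩
  · intro x
    constructor
    · intro a
      fin_cases x <;> fin_cases a
      · exact psd_of_eq _ ![1,0] 1 zero_le_one (by ext i j; fin_cases i <;> fin_cases j <;>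
          simp [AliceM, Matrix.vecMulVec_apply, -Matrix.cons_vecMulVec, -Matrix.vecMulVec_cons])
      · exact psd_of_eq _ ![0,1] 1 zero_le_one (by ext i j; fin_cases i <;> fin_cases j <;>
          simp [AliceM, Matrix.vecMulVec_apply, -Matrix.cons_vecMulVec, -Matrix.vecMulVec_cons])
      · exact psd_of_eq _ ![1,1] (1/2) (by norm_num) (by ext i j; fin_cases i <;> fin_cases j <;>
          norm_num [AliceM, Matrix.vecMulVec_apply, -Matrix.cons_vecMulVec, -Matrix.vecMulVec_cons])
      · exact psd_of_eq _ ![1,-1] (1/2) (by norm_num) (by ext i j; fin_cases i <;> fin_cases j <;>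
          norm_num [AliceM, Matrix.vecMulVec_apply, -Matrix.cons_vecMulVec, -Matrix.vecMulVec_cons])
    · fin_cases x <;> (ext i j; fin_cases i <;> fin_cases j <;>
        norm_num [Fin.sum_univ_two, AliceM, Matrix.one_fin_two])
  · intro y
    constructor
    · intro b
      fin_cases y <;> fin_cases b
      · exact psd_of_eq _ ![3,1] (1/10) (by norm_num) (by ext i j; fin_cases i <;> fin_cases j <;>
          norm_num [BobM, Matrix.vecMulVec_apply, -Matrix.cons_vecMulVec, -Matrix.vecMulVec_cons])
      · exact psd_of_eq _ ![1,-3] (1/10) (by norm_num) (by ext i j; fin_cases i <;> fin_cases j <;>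
          norm_num [BobM, Matrix.vecMulVec_apply, -Matrix.cons_vecMulVec, -Matrix.vecMulVec_cons])
      · exact psd_of_eq _ ![3,-1] (1/10) (by norm_num) (by ext i j; fin_cases i <;> fin_cases j <;>
          norm_num [BobM, Matrix.vecMulVec_apply, -Matrix.cons_vecMulVec, -Matrix.vecMulVec_cons])
      · exact psd_of_eq _ ![1,3] (1/10) (by norm_num) (by ext i j; fin_cases i <;> fin_cases j <;>
          norm_num [BobM, Matrix.vecMulVec_apply, -Matrix.cons_vecMulVec, -Matrix.vecMulVec_cons])
    · fin_cases y <;> (ext i j; fin_cases i <;> fin_cases j <;>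
        norm_num [Fin.sum_univ_two, BobM, Matrix.one_fin_two])
  · intro x y a b
    rw [bell_corr]
    fin_cases x <;> fin_cases y <;> fin_cases a <;> fin_cases b <;>
      norm_num [pQ, AliceM, BobM]


/-- Bell's theorem: there exist `k, n ≥ 2` for which the set of classical correlations is
a proper subset of the set of quantum correlations, i.e. there is a quantum correlation
that is not a classical correlation. -/
theorem bell_classical_proper_subset_quantum :
    ∃ k n : ℕ, 2 ≤ k ∧ 2 ≤ n ∧ CCorr k n ⊂ QCorr k n := by
  refine ⟨2, 2, le_refl 2, le_refl 2, ccorr_subset_qcorr, ?_⟩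
  intro hsub
  have h1 : pQ ∈ CCorr 2 2 := hsub pQ_mem_qcorr
  have h2 := chsh_ccorr_le h1
  rw [chsh_pQ] at h2
  norm_num at h2


end
end

section
/- For all integers k, n ≥ 2: every correlation arising from commuting POVMs on a finite-dimensional Hilbert space belongs to C_qa(k,n). That is, if H is a finite-dimensional complex Hilbert space, A^x and B^y (x,y ∈ [k]) are POVMs of length n on H with A^x_a B^y_b = B^y_b A^x_a for all x,y ∈ [k], a,b ∈ [n], and ξ ∈ H is a unit vector, then the correlation p(a,b|x,y) = ⟨A^x_a B^y_b ξ, ξ⟩ lies in C_qa(k,n). -/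
open Matrix
open scoped Kronecker ComplexOrder

noncomputable section

set_option linter.unusedSectionVars false
namespace QCorrAux

open Polynomial

variable {I : Type*} [Fintype I] [DecidableEq I]

lemma eq_zero_of_trace_mul_conjTranspose_self {c : Matrix I I ℂ}
    (h : (c * cᴴ).trace = 0) : c = 0 := by
  have h2 : (c * cᴴ).trace = ((∑ i, ∑ j, Complex.normSq (c i j) : ℝ) : ℂ) := by
    simp [Matrix.trace, Matrix.mul_apply, Matrix.conjTranspose_apply, Matrix.diag,
      Complex.star_def, Complex.mul_conj]
  rw [h2] at h
  have h3 : (∑ i, ∑ j, Complex.normSq (c i j) : ℝ) = 0 := by exact_mod_cast h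
  have h4 : ∀ i ∈ Finset.univ, ∑ j, Complex.normSq (c i j) = 0 := by
    exact (Finset.sum_eq_zero_iff_of_nonneg
      (fun i _ => Finset.sum_nonneg fun j _ => Complex.normSq_nonneg _)).mp h3
  ext i j
  have h5 := (Finset.sum_eq_zero_iff_of_nonneg
    (fun j _ => Complex.normSq_nonneg (c i j))).mp (h4 i (Finset.mem_univ i)) j
    (Finset.mem_univ j)
  simpa using Complex.normSq_eq_zero.mp h5

lemma pow_conj (U D V : Matrix I I ℂ) (hVU : V * U = 1) (hUV : U * V = 1) (m : ℕ) :
    (U * D * V) ^ m = U * D ^ m * V := by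
  induction m with
  | zero => simp [hUV]
  | succ m ih =>
      rw [pow_succ, ih, pow_succ]
      calc U * D ^ m * V * (U * D * V) = U * D ^ m * (V * U) * D * V := by
            simp only [Matrix.mul_assoc]
        _ = U * (D ^ m * D) * V := by rw [hVU]; simp only [Matrix.mul_assoc, Matrix.mul_one]
        _ = U * D ^ m * D * V := by simp only [Matrix.mul_assoc]
        _ = _ := by simp only [Matrix.mul_assoc]

lemma aeval_conj (U D V : Matrix I I ℂ) (hVU : V * U = 1) (hUV : U * V = 1) (P : ℂ[X]) :
    aeval (U * D * V) P = U * aeval D P * V := by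
  induction P using Polynomial.induction_on' with
  | add p q hp hq => rw [map_add, map_add, hp, hq, Matrix.mul_add, Matrix.add_mul]
  | monomial m a =>
      rw [aeval_monomial, aeval_monomial, pow_conj U D V hVU hUV, ← Algebra.smul_def,
        ← Algebra.smul_def, mul_smul_comm, smul_mul_assoc]

lemma aeval_diagonal' (f : I → ℂ) (P : ℂ[X]) :
    aeval (diagonal f) P = diagonal (fun i => P.eval (f i)) := by
  induction P using Polynomial.induction_on' with
  | add p q hp hq =>
      rw [map_add, hp, hq, diagonal_add]
      simp [eval_add]
  | monomial m a =>
      rw [aeval_monomial, ← Algebra.smul_def, diagonal_pow]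
      ext i j
      by_cases hij : i = j <;> simp [diagonal, hij, eval_monomial]

lemma exists_density (S : Submodule ℂ (Matrix I I ℂ))
    (h1 : (1 : Matrix I I ℂ) ∈ S)
    (hstar : ∀ s ∈ S, sᴴ ∈ S)
    (hmul : ∀ s ∈ S, ∀ t ∈ S, s * t ∈ S)
    (F : Matrix I I ℂ →ₗ[ℂ] ℂ)
    (hFpos : ∀ s ∈ S, 0 ≤ F (sᴴ * s))
    (hFstar : ∀ s ∈ S, F sᴴ = star (F s)) :
    ∃ r : Matrix I I ℂ, r.PosSemidef ∧ ∀ s ∈ S, (r * s).trace = F s := by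
  classical
  -- the trace pairing map into the dual
  let Φ : S →ₗ[ℂ] Module.Dual ℂ S :=
    { toFun := fun u =>
        { toFun := fun v => ((u : Matrix I I ℂ) * (v : Matrix I I ℂ)).trace
          map_add' := fun v w => by simp [Matrix.mul_add]
          map_smul' := fun a v => by simp [mul_smul_comm] }
      map_add' := fun u w => by ext v; simp [Matrix.add_mul]
      map_smul' := fun a u => by ext v; simp [smul_mul_assoc] }
  have hinj : Function.Injective Φ := by
    rw [injective_iff_map_eq_zero]
    intro u hu
    have h0 : ((u : Matrix I I ℂ) * (u : Matrix I I ℂ)ᴴ).trace = 0 := by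
      have := congrArg (fun g => g ⟨(u : Matrix I I ℂ)ᴴ, hstar _ u.2⟩) hu
      simpa [Φ] using this
    exact Subtype.ext (eq_zero_of_trace_mul_conjTranspose_self h0)
  have hsurj : Function.Surjective Φ :=
    (LinearMap.injective_iff_surjective_of_finrank_eq_finrank
      (by rw [Subspace.dual_finrank_eq])).mp hinj
  obtain ⟨u, hu⟩ := hsurj (F.comp S.subtype)
  have hrep : ∀ s (hs : s ∈ S), ((u : Matrix I I ℂ) * s).trace = F s := by
    intro s hs
    have := congrArg (fun g => g ⟨s, hs⟩) hu
    simpa [Φ] using this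
  -- hermitianness of u
  have hzero : ∀ t ∈ S, (((u : Matrix I I ℂ) - (u : Matrix I I ℂ)ᴴ) * t).trace = 0 := by
    intro t ht
    have e1 : ((u : Matrix I I ℂ) * t).trace = F t := hrep t ht
    have e2 : ((u : Matrix I I ℂ)ᴴ * t).trace = F t := by
      have e3 : ((u : Matrix I I ℂ)ᴴ * t).trace = star ((tᴴ * (u : Matrix I I ℂ)).trace) := by
        rw [← Matrix.trace_conjTranspose, Matrix.conjTranspose_mul,
          Matrix.conjTranspose_conjTranspose]
      rw [e3, Matrix.trace_mul_comm, hrep tᴴ (hstar t ht), hFstar t ht, star_star]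
    rw [Matrix.sub_mul, Matrix.trace_sub, e1, e2, sub_self]
  have hc : (u : Matrix I I ℂ) - (u : Matrix I I ℂ)ᴴ = 0 := by
    have hmem : (u : Matrix I I ℂ) - (u : Matrix I I ℂ)ᴴ ∈ S := S.sub_mem u.2 (hstar _ u.2)
    exact eq_zero_of_trace_mul_conjTranspose_self (hzero _ (hstar _ hmem))
  set r : Matrix I I ℂ := (u : Matrix I I ℂ) with hrdef
  have hrS : r ∈ S := u.2
  have hherm : r.IsHermitian := (sub_eq_zero.mp hc).symm
  -- spectral analysis of r
  set ev : I → ℝ := hherm.eigenvalues with hev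
  set U : Matrix I I ℂ := (hherm.eigenvectorUnitary : Matrix I I ℂ) with hU
  have hUV : U * star U = 1 := (Matrix.mem_unitaryGroup_iff).mp hherm.eigenvectorUnitary.2
  have hVU : star U * U = 1 := (Matrix.mem_unitaryGroup_iff').mp hherm.eigenvectorUnitary.2
  have spec : r = U * diagonal (RCLike.ofReal ∘ ev) * star U := hherm.spectral_theorem
  -- the interpolating polynomial of the negative part
  set Q : Polynomial ℝ := Lagrange.interpolate (Finset.univ.image ev) id (fun t => min t 0)
    with hQdef
  have hQ : ∀ i, Q.eval (ev i) = min (ev i) 0 := by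
    intro i
    exact Lagrange.eval_interpolate_at_node _ (Set.injOn_id _)
      (Finset.mem_image_of_mem ev (Finset.mem_univ i))
  set Qc : Polynomial ℂ := Q.map (algebraMap ℝ ℂ) with hQcdef
  have hevalQc : ∀ x : ℝ, Qc.eval (x : ℂ) = ((Q.eval x : ℝ) : ℂ) := by
    intro x
    rw [hQcdef, eval_map]
    exact Polynomial.eval₂_at_apply (algebraMap ℝ ℂ) x
  set c : Matrix I I ℂ := aeval r Qc with hcdef
  set G : Matrix I I ℂ := diagonal (fun i => ((min (ev i) 0 : ℝ) : ℂ)) with hGdef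
  have hcUGV : c = U * G * star U := by
    rw [hcdef, spec, aeval_conj U _ (star U) hVU hUV, aeval_diagonal']
    have hfun : (fun i => Qc.eval ((RCLike.ofReal ∘ ev) i))
        = fun i => ((min (ev i) 0 : ℝ) : ℂ) := by
      funext i
      have h0 : ((RCLike.ofReal ∘ ev) i : ℂ) = ((ev i : ℝ) : ℂ) := rfl
      rw [h0, hevalQc, hQ]
    rw [hfun, hGdef]
  -- membership of polynomials in r
  have hpowmem : ∀ m : ℕ, r ^ m ∈ S := by
    intro m
    induction m with
    | zero => simpa using h1
    | succ m ih => rw [pow_succ]; exact hmul _ ih _ hrS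
  have hcS : c ∈ S := by
    rw [hcdef]
    induction Qc using Polynomial.induction_on' with
    | add p q hp hq => rw [map_add]; exact S.add_mem hp hq
    | monomial m a =>
        rw [aeval_monomial, ← Algebra.smul_def]
        exact S.smul_mem _ (hpowmem m)
  -- the trace of r * (c * c)
  have hGherm : Gᴴ = G := by
    rw [hGdef, diagonal_conjTranspose]
    have hst : (star fun i => ((min (ev i) 0 : ℝ) : ℂ)) = fun i => ((min (ev i) 0 : ℝ) : ℂ) := by
      funext i
      simp [Complex.conj_ofReal]
    rw [hst]
  have hcherm : cᴴ = c := by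
    rw [hcUGV]
    simp only [Matrix.conjTranspose_mul, Matrix.conjTranspose_conjTranspose,
      Matrix.star_eq_conjTranspose, hGherm]
    simp only [Matrix.mul_assoc]
  have hcancel : ∀ X : Matrix I I ℂ, star U * (U * X) = X := by
    intro X
    rw [← Matrix.mul_assoc, hVU, Matrix.one_mul]
  have htr : (r * (c * c)).trace
      = ((∑ i, ev i * (min (ev i) 0) ^ 2 : ℝ) : ℂ) := by
    have hprod : r * (c * c)
        = U * (diagonal (RCLike.ofReal ∘ ev) * G * G) * star U := by
      rw [spec, hcUGV]
      simp only [Matrix.mul_assoc, hcancel]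
    rw [hprod, Matrix.trace_mul_cycle, ← Matrix.mul_assoc, hVU, Matrix.one_mul]
    rw [hGdef, Matrix.diagonal_mul_diagonal, Matrix.diagonal_mul_diagonal,
      Matrix.trace_diagonal]
    push_cast
    refine Finset.sum_congr rfl fun i _ => ?_
    have h0 : (RCLike.ofReal ∘ ev) i = ((ev i : ℝ) : ℂ) := rfl
    rw [h0]
    ring
  -- positivity forces nonnegative eigenvalues
  have hccS : c * c ∈ S := hmul _ hcS _ hcS
  have hposcc : 0 ≤ F (c * c) := by
    have := hFpos c hcS
    rwa [hcherm] at this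
  have hsumpos : 0 ≤ ∑ i, ev i * (min (ev i) 0) ^ 2 := by
    have := hposcc
    rw [← hrep _ hccS, htr] at this
    exact Complex.zero_le_real.mp this
  have hterm : ∀ i ∈ Finset.univ, ev i * (min (ev i) 0) ^ 2 ≤ 0 := by
    intro i _
    rcases le_or_gt 0 (ev i) with h | h
    · rw [min_eq_right h]
      simp
    · exact mul_nonpos_iff.mpr (Or.inr ⟨le_of_lt h, sq_nonneg _⟩)
  have hzero' : ∀ i ∈ Finset.univ, ev i * (min (ev i) 0) ^ 2 = 0 := by
    have hs0 : ∑ i, ev i * (min (ev i) 0) ^ 2 = 0 :=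
      le_antisymm (Finset.sum_nonpos hterm) hsumpos
    exact (Finset.sum_eq_zero_iff_of_nonpos hterm).mp hs0
  have hevnonneg : ∀ i, 0 ≤ ev i := by
    intro i
    by_contra hlt
    push_neg at hlt
    have h0 := hzero' i (Finset.mem_univ i)
    rw [min_eq_left (le_of_lt hlt)] at h0
    nlinarith [h0, hlt, sq_nonneg (ev i), mul_pos (mul_pos (neg_pos.mpr hlt) (neg_pos.mpr hlt)) (neg_pos.mpr hlt)]
  refine ⟨r, ?_, hrep⟩
  have hD : (diagonal (RCLike.ofReal ∘ ev) : Matrix I I ℂ).PosSemidef := by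
    refine Matrix.posSemidef_diagonal_iff.mpr fun i => ?_
    show (0:ℂ) ≤ ((ev i : ℝ) : ℂ)
    exact Complex.zero_le_real.mpr (hevnonneg i)
  rw [spec]
  exact hD.mul_mul_conjTranspose_same U

lemma kron_conjTranspose {J : Type*} [Fintype J] [DecidableEq J]
    (a : Matrix I I ℂ) (b : Matrix J J ℂ) : (a ⊗ₖ b)ᴴ = aᴴ ⊗ₖ bᴴ := by
  ext ⟨i, j⟩ ⟨i', j'⟩
  simp [Matrix.conjTranspose_apply, Matrix.kroneckerMap_apply, star_mul']

lemma dot_submatrix_equiv {J : Type*} [Fintype J] [DecidableEq J]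
    (σ : J ≃ I) (M : Matrix I I ℂ) (v : I → ℂ) :
    star (v ∘ σ) ⬝ᵥ ((M.submatrix σ σ) *ᵥ (v ∘ σ)) = star v ⬝ᵥ (M *ᵥ v) := by
  simp only [dotProduct, Matrix.mulVec, Matrix.submatrix_apply, Pi.star_apply,
    Function.comp_apply]
  rw [← Equiv.sum_comp σ (fun i => star (v i) * ∑ j, M i j * v j)]
  refine Finset.sum_congr rfl fun q _ => ?_
  congr 1
  exact Equiv.sum_comp σ (fun j => M (σ q) j * v j)

lemma dot_kron_one {J : Type*} [Fintype J] [DecidableEq J]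
    (X : Matrix I I ℂ) (v : I × J → ℂ) :
    star v ⬝ᵥ ((X ⊗ₖ (1 : Matrix J J ℂ)) *ᵥ v)
      = ((Matrix.of fun u w => v (u, w))ᴴ * X * (Matrix.of fun u w => v (u, w))).trace := by
  simp only [dotProduct, Matrix.mulVec, Matrix.kroneckerMap_apply, Pi.star_apply,
    Matrix.trace, Matrix.diag, Matrix.mul_apply, Matrix.conjTranspose_apply, Matrix.of_apply,
    Fintype.sum_prod_type, Matrix.one_apply]
  rw [Finset.sum_comm]
  refine Finset.sum_congr rfl fun w _ => ?_
  simp only [mul_ite, ite_mul, mul_one, mul_zero, zero_mul, one_mul, Finset.sum_ite_eq,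
    Finset.mem_univ, if_true]
  simp only [Finset.mul_sum, Finset.sum_mul, mul_assoc]
  rw [Finset.sum_comm]

lemma star_dot_comp_equiv {J : Type*} [Fintype J] [DecidableEq J] (σ : J ≃ I) (v : I → ℂ) :
    star (v ∘ σ) ⬝ᵥ (v ∘ σ) = star v ⬝ᵥ v := by
  have h := dot_submatrix_equiv σ 1 v
  rwa [Matrix.submatrix_one_equiv, Matrix.one_mulVec, Matrix.one_mulVec] at h

def mulMap (d : ℕ) : Matrix (Fin d × Fin d) (Fin d × Fin d) ℂ →ₗ[ℂ] Matrix (Fin d) (Fin d) ℂ where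
  toFun T := Matrix.of fun i j => ∑ kk : Fin d, T (i, kk) (kk, j)
  map_add' T T' := by
    ext i j
    simp [Finset.sum_add_distrib]
  map_smul' z T := by
    ext i j
    simp [Finset.mul_sum]

lemma mulMap_kron {d : ℕ} (a b : Matrix (Fin d) (Fin d) ℂ) : mulMap d (a ⊗ₖ b) = a * b := by
  ext i j
  simp [mulMap, Matrix.mul_apply, Matrix.kroneckerMap_apply]

end QCorrAux

namespace Matrix.PosSemidef

open scoped MatrixOrder

def sqrt {J : Type*} [Fintype J] [DecidableEq J] {M : Matrix J J ℂ} (_ : M.PosSemidef) :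
    Matrix J J ℂ := CFC.sqrt M

lemma sqrt_mul_self {J : Type*} [Fintype J] [DecidableEq J] {M : Matrix J J ℂ}
    (hM : M.PosSemidef) : hM.sqrt * hM.sqrt = M :=
  CFC.sqrt_mul_sqrt_self M hM.nonneg

lemma posSemidef_sqrt {J : Type*} [Fintype J] [DecidableEq J] {M : Matrix J J ℂ}
    (hM : M.PosSemidef) : hM.sqrt.PosSemidef :=
  (CFC.sqrt_nonneg M).posSemidef

end Matrix.PosSemidef


/-- Every correlation arising from commuting POVMs on a finite-dimensional Hilbert space
belongs to `C_qa(k,n) = closure C_q(k,n)`: if `A^x` and `B^y` are POVMs of length `n` on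
`ℂ^d` with `A^x_a B^y_b = B^y_b A^x_a` for all `x, y, a, b`, and `ξ ∈ ℂ^d` is a unit
vector, then `p(a,b|x,y) = ⟨A^x_a B^y_b ξ, ξ⟩` lies in the closure of `C_q(k,n)`. -/
theorem finite_dim_commuting_mem_qa (k n : ℕ) (hk : 2 ≤ k) (hn : 2 ≤ n) (d : ℕ)
    (A B : Fin k → Fin n → Matrix (Fin d) (Fin d) ℂ)
    (hA : ∀ x, IsMatPOVM (A x)) (hB : ∀ y, IsMatPOVM (B y))
    (hcomm : ∀ x y a b, A x a * B y b = B y b * A x a)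
    (ξ : Fin d → ℂ) (hξ : star ξ ⬝ᵥ ξ = 1)
    (p : Fin k → Fin k → Fin n → Fin n → ℝ)
    (hp : ∀ x y a b, (p x y a b : ℂ) = star ξ ⬝ᵥ ((A x a * B y b) *ᵥ ξ)) :
    p ∈ closure (QCorr k n) := by
  classical
  apply subset_closure
  -- the algebras generated by the `A`s and the `B`s
  set SA : Set (Matrix (Fin d) (Fin d) ℂ) := {M | ∃ x a, M = A x a} with hSA
  set SB : Set (Matrix (Fin d) (Fin d) ℂ) := {M | ∃ y b, M = B y b} with hSB
  set 𝒜 : Subalgebra ℂ (Matrix (Fin d) (Fin d) ℂ) := Algebra.adjoin ℂ SA with h𝒜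
  set ℬ : Subalgebra ℂ (Matrix (Fin d) (Fin d) ℂ) := Algebra.adjoin ℂ SB with hℬ
  have hAmem : ∀ x a, A x a ∈ 𝒜 := fun x a => Algebra.subset_adjoin ⟨x, a, rfl⟩
  have hBmem : ∀ y b, B y b ∈ ℬ := fun y b => Algebra.subset_adjoin ⟨y, b, rfl⟩
  have hcommgen : ∀ x a, ∀ m ∈ ℬ, A x a * m = m * A x a := by
    intro x a m hm
    induction hm using Algebra.adjoin_induction with
    | mem m hm => obtain ⟨y, b, rfl⟩ := hm; exact hcomm x y a b
    | algebraMap z => rw [Algebra.commutes]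
    | add u w hu hw hu' hw' => rw [mul_add, add_mul, hu', hw']
    | mul u w hu hw hu' hw' => rw [← mul_assoc, hu', mul_assoc, hw', mul_assoc]
  have hcommAB : ∀ m ∈ 𝒜, ∀ m' ∈ ℬ, m * m' = m' * m := by
    intro m hm
    induction hm using Algebra.adjoin_induction with
    | mem m hm => obtain ⟨x, a, rfl⟩ := hm; exact fun m' hm' => hcommgen x a m' hm'
    | algebraMap z => exact fun m' hm' => (Algebra.commutes z m')
    | add u w hu hw hu' hw' =>
        intro m' hm'
        rw [add_mul, mul_add, hu' m' hm', hw' m' hm']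
    | mul u w hu hw hu' hw' =>
        intro m' hm'
        rw [mul_assoc, hw' m' hm', ← mul_assoc, hu' m' hm', mul_assoc]
  have hstarA : ∀ m ∈ 𝒜, mᴴ ∈ 𝒜 := by
    intro m hm
    induction hm using Algebra.adjoin_induction with
    | mem m hm => obtain ⟨x, a, rfl⟩ := hm; rw [((hA x).1 a).1]; exact hAmem x a
    | algebraMap z =>
        rw [Algebra.algebraMap_eq_smul_one, Matrix.conjTranspose_smul,
          Matrix.conjTranspose_one]
        exact Subalgebra.smul_mem _ (one_mem _) _
    | add u w hu hw hu' hw' => rw [Matrix.conjTranspose_add]; exact add_mem hu' hw'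
    | mul u w hu hw hu' hw' => rw [Matrix.conjTranspose_mul]; exact mul_mem hw' hu'
  have hstarB : ∀ m ∈ ℬ, mᴴ ∈ ℬ := by
    intro m hm
    induction hm using Algebra.adjoin_induction with
    | mem m hm => obtain ⟨y, b, rfl⟩ := hm; rw [((hB y).1 b).1]; exact hBmem y b
    | algebraMap z =>
        rw [Algebra.algebraMap_eq_smul_one, Matrix.conjTranspose_smul,
          Matrix.conjTranspose_one]
        exact Subalgebra.smul_mem _ (one_mem _) _
    | add u w hu hw hu' hw' => rw [Matrix.conjTranspose_add]; exact add_mem hu' hw'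
    | mul u w hu hw hu' hw' => rw [Matrix.conjTranspose_mul]; exact mul_mem hw' hu'
  -- the span of Kronecker products
  set gens : Set (Matrix (Fin d × Fin d) (Fin d × Fin d) ℂ) :=
    {T | ∃ a ∈ 𝒜, ∃ b ∈ ℬ, T = a ⊗ₖ b} with hgens
  set S : Submodule ℂ (Matrix (Fin d × Fin d) (Fin d × Fin d) ℂ) :=
    Submodule.span ℂ gens with hSdef
  have hS1 : (1 : Matrix (Fin d × Fin d) (Fin d × Fin d) ℂ) ∈ S :=
    Submodule.subset_span ⟨1, one_mem _, 1, one_mem _, (Matrix.one_kronecker_one).symm⟩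
  have hSstar : ∀ s ∈ S, sᴴ ∈ S := by
    intro s hs
    induction hs using Submodule.span_induction with
    | mem T hT =>
        obtain ⟨a, ha, b, hb, rfl⟩ := hT
        rw [QCorrAux.kron_conjTranspose]
        exact Submodule.subset_span ⟨aᴴ, hstarA a ha, bᴴ, hstarB b hb, rfl⟩
    | zero => rw [Matrix.conjTranspose_zero]; exact S.zero_mem
    | add u w hu hw hu' hw' => rw [Matrix.conjTranspose_add]; exact S.add_mem hu' hw'
    | smul z u hu hu' => rw [Matrix.conjTranspose_smul]; exact S.smul_mem _ hu'
  have hSmul : ∀ s ∈ S, ∀ t ∈ S, s * t ∈ S := by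
    intro s hs t ht
    induction hs, ht using Submodule.span_induction₂ with
    | mem_mem s t hsg htg =>
        obtain ⟨a, ha, b, hb, rfl⟩ := hsg
        obtain ⟨a', ha', b', hb', rfl⟩ := htg
        rw [← Matrix.mul_kronecker_mul]
        exact Submodule.subset_span ⟨a * a', mul_mem ha ha', b * b', mul_mem hb hb', rfl⟩
    | zero_left t ht => rw [Matrix.zero_mul]; exact S.zero_mem
    | zero_right s hs => rw [Matrix.mul_zero]; exact S.zero_mem
    | add_left u w t hu hw ht hu' hw' => rw [Matrix.add_mul]; exact S.add_mem hu' hw'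
    | add_right s u w hs hu hw hu' hw' => rw [Matrix.mul_add]; exact S.add_mem hu' hw'
    | smul_left z u t hu ht hu' => rw [smul_mul_assoc]; exact S.smul_mem _ hu'
    | smul_right z s u hs hu hu' => rw [mul_smul_comm]; exact S.smul_mem _ hu'
  -- the functional
  set F : Matrix (Fin d × Fin d) (Fin d × Fin d) ℂ →ₗ[ℂ] ℂ :=
    { toFun := fun T => star ξ ⬝ᵥ ((QCorrAux.mulMap d T) *ᵥ ξ)
      map_add' := fun T T' => by
        simp only [map_add, Matrix.add_mulVec, dotProduct_add]
      map_smul' := fun z T => by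
        simp only [LinearMap.map_smul, Matrix.smul_mulVec, dotProduct_smul,
          RingHom.id_apply, smul_eq_mul] } with hF
  have hkey : ∀ s ∈ S, ∀ t ∈ S,
      QCorrAux.mulMap d (sᴴ * t) = (QCorrAux.mulMap d s)ᴴ * (QCorrAux.mulMap d t) := by
    intro s hs t ht
    induction hs, ht using Submodule.span_induction₂ with
    | mem_mem s t hsg htg =>
        obtain ⟨a, ha, b, hb, rfl⟩ := hsg
        obtain ⟨a', ha', b', hb', rfl⟩ := htg
        rw [QCorrAux.kron_conjTranspose, ← Matrix.mul_kronecker_mul, QCorrAux.mulMap_kron,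
          QCorrAux.mulMap_kron, QCorrAux.mulMap_kron, Matrix.conjTranspose_mul]
        have h := hcommAB _ (mul_mem (hstarA a ha) ha') _ (hstarB b hb)
        rw [← mul_assoc, h]
        simp only [mul_assoc]
    | zero_left t ht => simp
    | zero_right s hs => simp
    | add_left u w t hu hw ht hu' hw' =>
        rw [Matrix.conjTranspose_add, Matrix.add_mul, map_add, hu', hw', map_add,
          Matrix.conjTranspose_add, Matrix.add_mul]
    | add_right s u w hs hu hw hu' hw' =>
        rw [Matrix.mul_add, map_add, hu', hw', map_add, Matrix.mul_add]
    | smul_left z u t hu ht hu' =>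
        rw [Matrix.conjTranspose_smul, smul_mul_assoc, LinearMap.map_smul, hu',
          LinearMap.map_smul, Matrix.conjTranspose_smul, smul_mul_assoc]
    | smul_right z s u hs hu hu' =>
        rw [mul_smul_comm, LinearMap.map_smul, hu', LinearMap.map_smul, mul_smul_comm]
  have hmulMap_one : QCorrAux.mulMap d 1 = 1 := by
    rw [← Matrix.one_kronecker_one, QCorrAux.mulMap_kron, Matrix.one_mul]
  have hFpos : ∀ s ∈ S, 0 ≤ F (sᴴ * s) := by
    intro s hs
    have h1 : F (sᴴ * s) = star ((QCorrAux.mulMap d s) *ᵥ ξ) ⬝ᵥ ((QCorrAux.mulMap d s) *ᵥ ξ) := by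
      show star ξ ⬝ᵥ ((QCorrAux.mulMap d (sᴴ * s)) *ᵥ ξ) = _
      rw [hkey s hs s hs, ← Matrix.mulVec_mulVec, Matrix.dotProduct_mulVec, ← Matrix.star_mulVec]
    rw [h1]
    exact dotProduct_star_self_nonneg _
  have hFstar : ∀ s ∈ S, F sᴴ = star (F s) := by
    intro s hs
    have h0 : QCorrAux.mulMap d sᴴ = (QCorrAux.mulMap d s)ᴴ := by
      have := hkey s hs 1 hS1
      rwa [mul_one, hmulMap_one, mul_one] at this
    show star ξ ⬝ᵥ ((QCorrAux.mulMap d sᴴ) *ᵥ ξ) = star (star ξ ⬝ᵥ ((QCorrAux.mulMap d s) *ᵥ ξ))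
    rw [h0, Matrix.dotProduct_mulVec, ← Matrix.star_mulVec, Matrix.star_dotProduct]
  obtain ⟨r, hrpsd, hrep⟩ := QCorrAux.exists_density S hS1 hSstar hSmul F hFpos hFstar
  have htrace1 : r.trace = 1 := by
    have := hrep 1 hS1
    rw [mul_one] at this
    rw [this]
    show star ξ ⬝ᵥ ((QCorrAux.mulMap d 1) *ᵥ ξ) = 1
    rw [hmulMap_one, Matrix.one_mulVec, hξ]
  have hvals : ∀ x y a b, (r * (A x a ⊗ₖ B y b)).trace = (p x y a b : ℂ) := by
    intro x y a b
    have hmem : A x a ⊗ₖ B y b ∈ S :=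
      Submodule.subset_span ⟨A x a, hAmem x a, B y b, hBmem y b, rfl⟩
    rw [hrep _ hmem]
    show star ξ ⬝ᵥ ((QCorrAux.mulMap d (A x a ⊗ₖ B y b)) *ᵥ ξ) = _
    rw [QCorrAux.mulMap_kron, ← hp]
  -- purification of the density matrix `r`
  set c : Matrix (Fin d × Fin d) (Fin d × Fin d) ℂ := hrpsd.sqrt with hcdef
  have hcc : c * c = r := hrpsd.sqrt_mul_self
  have hcherm : cᴴ = c := hrpsd.posSemidef_sqrt.1
  set v : (Fin d × Fin d) × (Fin d × Fin d) → ℂ := fun q => c q.1 q.2 with hvdef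
  have hWc : (Matrix.of fun u w => v (u, w)) = c := rfl
  set e : (Fin d × (Fin d × Fin d)) ≃ Fin (d * (d * d)) :=
    ((Equiv.refl (Fin d)).prodCongr finProdFinEquiv).trans finProdFinEquiv with hedef
  set B₁ : Fin k → Fin n → Matrix (Fin d × (Fin d × Fin d)) (Fin d × (Fin d × Fin d)) ℂ :=
    fun y b => B y b ⊗ₖ (1 : Matrix (Fin d × Fin d) (Fin d × Fin d) ℂ) with hB₁
  set B' : Fin k → Fin n → Matrix (Fin (d * (d * d))) (Fin (d * (d * d))) ℂ :=
    fun y b => (B₁ y b).submatrix e.symm e.symm with hB'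
  set σ : (Fin d × Fin (d * (d * d))) ≃ ((Fin d × Fin d) × (Fin d × Fin d)) :=
    ((Equiv.refl (Fin d)).prodCongr e.symm).trans
      (Equiv.prodAssoc (Fin d) (Fin d) (Fin d × Fin d)).symm with hσ
  set ξ' : Fin d × Fin (d * (d * d)) → ℂ := v ∘ σ with hξ'
  have hMsub : ∀ x y a b, (A x a ⊗ₖ B' y b)
      = ((A x a ⊗ₖ B y b) ⊗ₖ (1 : Matrix (Fin d × Fin d) (Fin d × Fin d) ℂ)).submatrix σ σ := by
    intro x y a b
    ext ⟨q1, q2⟩ ⟨q1', q2'⟩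
    simp only [Matrix.submatrix_apply, Matrix.kroneckerMap_apply, hB', hB₁, hσ,
      Equiv.trans_apply, Equiv.prodCongr_apply, Equiv.prodAssoc_symm_apply, Equiv.refl_apply,
      Prod.map_apply, Prod.map, mul_assoc]
  have hval : ∀ x y a b,
      star ξ' ⬝ᵥ ((A x a ⊗ₖ B' y b) *ᵥ ξ') = (p x y a b : ℂ) := by
    intro x y a b
    rw [hMsub x y a b, hξ', QCorrAux.dot_submatrix_equiv σ _ v, QCorrAux.dot_kron_one, hWc,
      hcherm]
    rw [Matrix.trace_mul_cycle, hcc, hvals x y a b]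
  refine ⟨d, d * (d * d), A, B', ξ', hA, ?_, ?_, fun x y a b => (hval x y a b).symm⟩
  · intro y
    obtain ⟨hpsd, hsum⟩ := hB y
    constructor
    · intro b
      refine (Matrix.posSemidef_submatrix_equiv e.symm).mpr ?_
      have key : B₁ y b = ((hpsd b).sqrt ⊗ₖ (1 : Matrix (Fin d × Fin d) (Fin d × Fin d) ℂ))ᴴ *
          ((hpsd b).sqrt ⊗ₖ (1 : Matrix (Fin d × Fin d) (Fin d × Fin d) ℂ)) := by
        rw [QCorrAux.kron_conjTranspose, (hpsd b).posSemidef_sqrt.1, Matrix.conjTranspose_one,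
          ← Matrix.mul_kronecker_mul, (hpsd b).sqrt_mul_self, Matrix.one_mul]
      rw [key]
      exact Matrix.posSemidef_conjTranspose_mul_self _
    · have hsum1 : ∑ b, B₁ y b = 1 := by
        have h2 : (∑ b, B₁ y b)
            = (∑ b, B y b) ⊗ₖ (1 : Matrix (Fin d × Fin d) (Fin d × Fin d) ℂ) := by
          ext q q'
          simp [hB₁, Matrix.sum_apply, Matrix.kroneckerMap_apply, Finset.sum_mul]
        rw [h2, hsum, Matrix.one_kronecker_one]
      have h3 : ∑ b, B' y b = (∑ b, B₁ y b).submatrix e.symm e.symm := by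
        ext i j
        simp [hB', Matrix.sum_apply, Matrix.submatrix_apply]
      rw [h3, hsum1, Matrix.submatrix_one_equiv]
  · rw [hξ', QCorrAux.star_dot_comp_equiv σ v]
    have h4 := QCorrAux.dot_kron_one (1 : Matrix (Fin d × Fin d) (Fin d × Fin d) ℂ) v
    rw [Matrix.one_kronecker_one, Matrix.one_mulVec, hWc, Matrix.mul_one, hcherm, hcc,
      htrace1] at h4
    exact h4



end
end

section
/- For all integers k, n ≥ 2, the closure of C^s_q(k,n) in ℝ^{k²n²} equals the closure of the set of matrix tracial PVM correlations, namely the set of tuples p ∈ [0,1]^{k²n²} of the form p(a,b|x,y) = tr(e^x_a e^y_b)/d, where d ≥ 1 and e^1, …, e^k are PVMs of length n in the matrix algebra M_d(ℂ). -/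
open Matrix
open scoped Kronecker ComplexOrder

noncomputable section

/-- A correlation is synchronous if equal questions never receive distinct answers:
`p(a,b|x,x) = 0` for all `x` and all `a ≠ b`. -/
def Synchronous {k n : ℕ} (p : Fin k → Fin k → Fin n → Fin n → ℝ) : Prop :=
  ∀ x a b, a ≠ b → p x x a b = 0

/-- The set of matrix tracial PVM correlations: correlations of the form
`p(a,b|x,y) = tr(e^x_a e^y_b)/d` for some `d ≥ 1` and PVMs `e^1, …, e^k` of length `n`
in the matrix algebra `M_d(ℂ)` (tuples of self-adjoint idempotents summing to `1`). -/
def MatTracialPVMCorr (k n : ℕ) : Set (Fin k → Fin k → Fin n → Fin n → ℝ) :=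
  { p | ∃ (d : ℕ) (_ : 1 ≤ d) (e : Fin k → Fin n → Matrix (Fin d) (Fin d) ℂ),
      (∀ x a, (e x a)ᴴ = e x a ∧ e x a * e x a = e x a) ∧
      (∀ x, ∑ a, e x a = 1) ∧
      ∀ x y a b, (p x y a b : ℂ) = (e x a * e y b).trace / (d : ℂ) }

open Complex Filter

namespace ClosureSyncAux
open Complex Filter

variable {α β : Type*} [Fintype α] [Fintype β] [DecidableEq α]

lemma trace_self_mul_conjTranspose (Y : Matrix α β ℂ) :
    (Y * Yᴴ).trace = ((∑ i, ∑ j, Complex.normSq (Y i j) : ℝ) : ℂ) := by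
  simp [Matrix.trace, Matrix.diag, Matrix.mul_apply, Matrix.conjTranspose_apply,
    Complex.mul_conj]

lemma eq_zero_of_trace_self_mul_conjTranspose (Y : Matrix α β ℂ)
    (h : (Y * Yᴴ).trace = 0) : Y = 0 := by
  rw [trace_self_mul_conjTranspose] at h
  have h' : (∑ i, ∑ j, Complex.normSq (Y i j) : ℝ) = 0 := by exact_mod_cast h
  have hz : ∀ i ∈ Finset.univ, ∀ j ∈ Finset.univ, Complex.normSq (Y i j) = 0 := by
    have h1 := (Finset.sum_eq_zero_iff_of_nonneg
      (fun i _ => Finset.sum_nonneg fun j _ => Complex.normSq_nonneg _)).mp h'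
    intro i _ j _
    exact (Finset.sum_eq_zero_iff_of_nonneg (fun j _ => Complex.normSq_nonneg _)).mp
      (h1 i (Finset.mem_univ i)) j (Finset.mem_univ j)
  ext i j
  simpa using Complex.normSq_eq_zero.mp (hz i (Finset.mem_univ i) j (Finset.mem_univ j))

open scoped MatrixOrder in
lemma psd_sqrt {P : Matrix α α ℂ} (hP : P.PosSemidef) :
    ∃ S : Matrix α α ℂ, S * S = P ∧ Sᴴ = S := by
  obtain ⟨X, hX, -, h⟩ := CFC.exists_sqrt_of_isSelfAdjoint_of_quasispectrumRestricts hP.isHermitian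
    (QuasispectrumRestricts.nnreal_of_nonneg hP.nonneg)
  exact ⟨X, h, hX⟩

/-- For `P, Q` psd, `tr(P X Q Xᴴ)` is a nonnegative real, and vanishing forces `P X Q = 0`. -/
lemma psd_trace_conj [DecidableEq β] {P : Matrix α α ℂ} {Q : Matrix β β ℂ}
    (hP : P.PosSemidef) (hQ : Q.PosSemidef) (X : Matrix α β ℂ) :
    ∃ t : ℝ, 0 ≤ t ∧ (P * X * Q * Xᴴ).trace = (t : ℂ) ∧
      ((P * X * Q * Xᴴ).trace = 0 → P * X * Q = 0) := by
  obtain ⟨S, hS, hSH⟩ := psd_sqrt hP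
  obtain ⟨T, hT, hTH⟩ := psd_sqrt hQ
  set Y := S * X * T with hYdef
  have hYY : Y * Yᴴ = S * (X * Q * Xᴴ) * S := by
    rw [hYdef, conjTranspose_mul, conjTranspose_mul, hSH, hTH, ← hT]
    simp only [Matrix.mul_assoc]
  have htr : (P * X * Q * Xᴴ).trace = (Y * Yᴴ).trace := by
    rw [hYY, Matrix.trace_mul_comm (S * (X * Q * Xᴴ)) S, ← Matrix.mul_assoc, hS]
    simp only [← Matrix.mul_assoc]
  refine ⟨∑ i, ∑ j, Complex.normSq (Y i j),
    Finset.sum_nonneg fun i _ => Finset.sum_nonneg fun j _ => Complex.normSq_nonneg _, ?_, ?_⟩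
  · rw [htr, trace_self_mul_conjTranspose]
  · intro h
    have hY0 : Y = 0 := eq_zero_of_trace_self_mul_conjTranspose Y (htr ▸ h)
    have : P * X * Q = S * Y * T := by
      rw [hYdef, ← hS, ← hT]; simp only [Matrix.mul_assoc]
    rw [this, hY0, Matrix.mul_zero, Matrix.zero_mul]

lemma psd_trace {P M : Matrix α α ℂ} (hP : P.PosSemidef) (hM : M.PosSemidef) :
    ∃ t : ℝ, 0 ≤ t ∧ (P * M).trace = (t : ℂ) ∧ ((P * M).trace = 0 → P * M = 0) := by
  obtain ⟨t, ht0, ht, hz⟩ := psd_trace_conj hP hM (1 : Matrix α α ℂ)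
  simp only [Matrix.mul_one, Matrix.one_mul, Matrix.conjTranspose_one] at ht hz
  exact ⟨t, ht0, ht, hz⟩

lemma posSemidef_sum {ι : Type*} (s : Finset ι) (f : ι → Matrix α α ℂ)
    (h : ∀ i ∈ s, (f i).PosSemidef) : (∑ i ∈ s, f i).PosSemidef := by
  classical
  induction s using Finset.induction_on with
  | empty => simpa using (Matrix.PosSemidef.zero (n := α) (R := ℂ))
  | insert _ _ hx ih =>
    rw [Finset.sum_insert hx]
    exact (h _ (Finset.mem_insert_self _ _)).add
      (ih fun i hi => h i (Finset.mem_insert_of_mem hi))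

lemma dot_kron {dA dB : ℕ} (A : Matrix (Fin dA) (Fin dA) ℂ) (B : Matrix (Fin dB) (Fin dB) ℂ)
    (ξ : Fin dA × Fin dB → ℂ) :
    star ξ ⬝ᵥ ((A ⊗ₖ B) *ᵥ ξ) =
      (A * (Matrix.of fun i j => ξ (i, j)) * Bᵀ * (Matrix.of fun i j => ξ (i, j))ᴴ).trace := by
  simp only [Matrix.trace, Matrix.diag, Matrix.mul_apply, Matrix.conjTranspose_apply,
    Matrix.transpose_apply, Matrix.of_apply, dotProduct, Matrix.mulVec, Pi.star_apply,
    Matrix.kroneckerMap_apply, Fintype.sum_prod_type, Finset.sum_mul, Finset.mul_sum]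
  refine Finset.sum_congr rfl fun i _ => Finset.sum_congr rfl fun j _ => ?_
  rw [Finset.sum_comm]
  refine Finset.sum_congr rfl fun l _ => Finset.sum_congr rfl fun k _ => ?_
  ring

lemma dot_self {dA dB : ℕ} (ξ : Fin dA × Fin dB → ℂ) :
    star ξ ⬝ᵥ ξ =
      ((Matrix.of fun i j => ξ (i, j)) * (Matrix.of fun i j => ξ (i, j))ᴴ).trace := by
  simp only [Matrix.trace, Matrix.diag, Matrix.mul_apply, Matrix.conjTranspose_apply,
    Matrix.of_apply, dotProduct, Pi.star_apply, Fintype.sum_prod_type]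
  refine Finset.sum_congr rfl fun i _ => Finset.sum_congr rfl fun j _ => ?_
  exact mul_comm _ _


/-- projections summing to 1 are pairwise orthogonal -/
lemma pvm_orth {d k n : ℕ} (e : Fin k → Fin n → Matrix (Fin d) (Fin d) ℂ)
    (hproj : ∀ x a, (e x a)ᴴ = e x a ∧ e x a * e x a = e x a)
    (hsum : ∀ x, ∑ a, e x a = 1) :
    ∀ x a b, a ≠ b → e x a * e x b = 0 := by
  intro x a b hab
  -- each trace(e_a e_b (e_a e_b)ᴴ) = trace (e_a e_b)
  have key : ∀ c, (e x a * e x c * (e x a * e x c)ᴴ).trace = (e x a * e x c).trace := by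
    intro c
    rw [conjTranspose_mul, (hproj x a).1, (hproj x c).1]
    have h1 : e x a * e x c * (e x c * e x a) = e x a * e x c * e x a := by
      rw [← Matrix.mul_assoc, Matrix.mul_assoc (e x a) (e x c) (e x c), (hproj x c).2]
    rw [h1, Matrix.trace_mul_cycle, (hproj x a).2]
  -- the sum over c ≠ a of trace(e_a e_c) is 0
  have hsum0 : ∑ c ∈ Finset.univ.erase a, (e x a * e x c).trace = 0 := by
    have : ∑ c ∈ Finset.univ.erase a, e x a * e x c = e x a * (1 - e x a) := by
      rw [← Finset.mul_sum, Finset.sum_erase_eq_sub (Finset.mem_univ a), hsum x]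
    rw [← Matrix.trace_sum, this, Matrix.mul_sub, Matrix.mul_one, (hproj x a).2, sub_self,
      Matrix.trace_zero]
  -- nonnegativity
  have hnn : ∀ c ∈ Finset.univ.erase a,
      (e x a * e x c).trace = ((∑ i, ∑ j, Complex.normSq ((e x a * e x c) i j) : ℝ) : ℂ) := by
    intro c _
    rw [← key c, trace_self_mul_conjTranspose]
  have hreal : ∑ c ∈ Finset.univ.erase a,
      (∑ i, ∑ j, Complex.normSq ((e x a * e x c) i j) : ℝ) = 0 := by
    have := hsum0
    rw [Finset.sum_congr rfl hnn] at this
    exact_mod_cast this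
  have hzero : (∑ i, ∑ j, Complex.normSq ((e x a * e x b) i j) : ℝ) = 0 := by
    refine (Finset.sum_eq_zero_iff_of_nonneg ?_).mp hreal b (Finset.mem_erase.mpr ⟨(Ne.symm hab), Finset.mem_univ b⟩)
    intro c _
    exact Finset.sum_nonneg fun i _ => Finset.sum_nonneg fun j _ => Complex.normSq_nonneg _
  apply eq_zero_of_trace_self_mul_conjTranspose
  rw [key b, hnn b (Finset.mem_erase.mpr ⟨Ne.symm hab, Finset.mem_univ b⟩), hzero]
  simp


end ClosureSyncAux

lemma matTracial_subset (k n : ℕ) :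
    MatTracialPVMCorr k n ⊆ {p ∈ QCorr k n | Synchronous p} := by
  rintro p ⟨d, hd, e, hproj, hsum, htr⟩
  have horth := ClosureSyncAux.pvm_orth e hproj hsum
  have hpsd : ∀ x a, (e x a).PosSemidef := by
    intro x a
    have h : e x a = (e x a)ᴴ * e x a := by rw [(hproj x a).1, (hproj x a).2]
    rw [h]; exact Matrix.posSemidef_conjTranspose_mul_self _
  have hd0 : (0:ℝ) < d := by
    have : (1:ℕ) ≤ d := hd
    exact_mod_cast Nat.lt_of_lt_of_le Nat.zero_lt_one hd
  have hdC : (d : ℂ) ≠ 0 := by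
    exact_mod_cast (Nat.cast_ne_zero (R := ℂ)).mpr (by omega)
  set c : ℂ := (((Real.sqrt d)⁻¹ : ℝ) : ℂ) with hc
  have hcc : c * c = (d : ℂ)⁻¹ := by
    rw [hc, ← Complex.ofReal_mul, ← mul_inv, Real.mul_self_sqrt hd0.le, Complex.ofReal_inv,
      Complex.ofReal_natCast]
  set ξ : Fin d × Fin d → ℂ := fun q => if q.1 = q.2 then c else 0 with hξ
  have hX : (Matrix.of fun i j => ξ (i, j)) = c • (1 : Matrix (Fin d) (Fin d) ℂ) := by
    ext i j
    simp [hξ, Matrix.one_apply, mul_ite]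
  have hXH : (c • (1 : Matrix (Fin d) (Fin d) ℂ))ᴴ = c • (1 : Matrix (Fin d) (Fin d) ℂ) := by
    rw [Matrix.conjTranspose_smul, Matrix.conjTranspose_one, hc, Complex.star_def,
      Complex.conj_ofReal]
  have hnorm : star ξ ⬝ᵥ ξ = 1 := by
    rw [ClosureSyncAux.dot_self, hX, hXH, Matrix.smul_mul, Matrix.mul_smul, Matrix.one_mul,
      Matrix.trace_smul, Matrix.trace_smul, Matrix.trace_one]
    simp only [smul_eq_mul, Fintype.card_fin]
    rw [← mul_assoc, hcc, inv_mul_cancel₀ hdC]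
  refine ⟨⟨d, d, (fun x a => e x a), (fun y b => (e y b)ᵀ), ξ, ?_, ?_, hnorm, ?_⟩, ?_⟩
  · exact fun x => ⟨fun a => hpsd x a, hsum x⟩
  · intro y
    refine ⟨fun b => (hpsd y b).transpose, ?_⟩
    rw [← Matrix.transpose_sum, hsum y, Matrix.transpose_one]
  · intro x y a b
    rw [ClosureSyncAux.dot_kron, hX, hXH, htr x y a b, Matrix.transpose_transpose]
    simp only [Matrix.mul_smul, Matrix.smul_mul, Matrix.mul_one, Matrix.trace_smul, smul_smul,
      smul_eq_mul]
    rw [hcc, div_eq_inv_mul]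
  · intro x a b hab
    have h := htr x x a b
    rw [horth x a b hab, Matrix.trace_zero, zero_div] at h
    exact_mod_cast h

lemma key {k n r : ℕ} (p : Fin k → Fin k → Fin n → Fin n → ℝ)
    (lam : Fin r → ℝ) (e : Fin k → Fin n → Matrix (Fin r) (Fin r) ℂ)
    (hl0 : ∀ i, 0 ≤ lam i) (hl1 : ∑ i, lam i = 1)
    (herm : ∀ x a, (e x a)ᴴ = e x a)
    (hsum : ∀ x, ∑ a, e x a = 1)
    (hcomm : ∀ x a i j, lam i ≠ lam j → e x a i j = 0)
    (hproj : ∀ x a i j, lam j ≠ 0 → (e x a * e x a) i j = e x a i j)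
    (hp : ∀ x y a b, (p x y a b : ℂ) = ∑ i, (e x a * e y b) i i * (lam i : ℂ)) :
    p ∈ closure (MatTracialPVMCorr k n) := by
  classical
  set c : ℕ → Fin r → ℕ := fun m i => ⌈lam i * m⌉₊ with hcdef
  set N : ℕ → ℕ := fun m => ∑ i, c m i with hNdef
  have hcfun : ∀ (m : ℕ) i j, lam i = lam j → c m i = c m j := by
    intro m i j h; simp only [hcdef, h]
  have hcpos : ∀ (m : ℕ) j, 0 < c m j → lam j ≠ 0 := by
    intro m j h h0
    rw [hcdef] at h
    simp only [h0, zero_mul, Nat.ceil_zero, lt_self_iff_false] at h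
  have hcl : ∀ (m : ℕ) i, lam i * m ≤ c m i := fun m i => Nat.le_ceil _
  have hcu : ∀ (m : ℕ) i, (c m i : ℝ) ≤ lam i * m + 1 := by
    intro m i
    exact (Nat.ceil_lt_add_one (mul_nonneg (hl0 i) (Nat.cast_nonneg m))).le
  have hNcast : ∀ m : ℕ, (N m : ℝ) = ∑ i, (c m i : ℝ) := by
    intro m; rw [hNdef]; push_cast; rfl
  have hNl : ∀ m : ℕ, (m : ℝ) ≤ N m := by
    intro m
    have h := Finset.sum_le_sum (fun i (_ : i ∈ Finset.univ) => hcl m i)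
    rw [← Finset.sum_mul, hl1, one_mul] at h
    rw [hNcast]; exact h
  have hNu : ∀ m : ℕ, (N m : ℝ) ≤ m + r := by
    intro m
    have h := Finset.sum_le_sum (fun i (_ : i ∈ Finset.univ) => hcu m i)
    rw [Finset.sum_add_distrib, ← Finset.sum_mul, hl1, one_mul, Finset.sum_const,
      Finset.card_univ, Fintype.card_fin, nsmul_eq_mul, mul_one] at h
    rw [hNcast]; exact h
  -- ratio convergence
  have hratio : ∀ i, Tendsto (fun m : ℕ => (c m i : ℝ) / (N m : ℝ)) atTop (nhds (lam i)) := by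
    intro i
    have hlow : Tendsto (fun m : ℕ => lam i * ((m : ℝ) / ((m : ℝ) + r))) atTop
        (nhds (lam i)) := by
      have h := (tendsto_natCast_div_add_atTop (r : ℝ)).const_mul (lam i)
      simpa using h
    have hhigh : Tendsto (fun m : ℕ => lam i + 1 / (m : ℝ)) atTop (nhds (lam i)) := by
      simpa using tendsto_const_nhds.add (tendsto_one_div_atTop_nhds_zero_nat (𝕜 := ℝ))
    refine tendsto_of_tendsto_of_tendsto_of_le_of_le' hlow hhigh ?_ ?_
    · filter_upwards [Filter.eventually_ge_atTop 1] with m hm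
      have hm1 : (1 : ℝ) ≤ m := by exact_mod_cast hm
      have hN0 : (0 : ℝ) < N m := lt_of_lt_of_le (by linarith) (hNl m)
      have h1 : lam i * ((m : ℝ) / ((m : ℝ) + r)) = (lam i * m) / ((m : ℝ) + r) := by ring
      rw [h1]
      exact div_le_div₀ (Nat.cast_nonneg _) (hcl m i) hN0 (hNu m)
    · filter_upwards [Filter.eventually_ge_atTop 1] with m hm
      have hm1 : (1 : ℝ) ≤ m := by exact_mod_cast hm
      have hm0 : (0 : ℝ) < m := by linarith
      have h2 : (c m i : ℝ) / (N m : ℝ) ≤ (lam i * m + 1) / m :=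
        div_le_div₀ (by have := mul_nonneg (hl0 i) (Nat.cast_nonneg (α := ℝ) m); linarith) (hcu m i) hm0 (hNl m)
      have h3 : (lam i * m + 1) / (m : ℝ) = lam i + 1 / m := by field_simp
      rw [h3] at h2; exact h2
  set t : Fin k → Fin k → Fin n → Fin n → Fin r → ℝ :=
    fun x y a b i => ((e x a * e y b) i i).re with ht
  set q : ℕ → (Fin k → Fin k → Fin n → Fin n → ℝ) :=
    fun m x y a b => ∑ i, ((c m i : ℝ) / (N m : ℝ)) * t x y a b i with hq
  have hptend : Tendsto q atTop (nhds p) := by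
    rw [tendsto_pi_nhds]; intro x
    rw [tendsto_pi_nhds]; intro y
    rw [tendsto_pi_nhds]; intro a
    rw [tendsto_pi_nhds]; intro b
    have hpx : p x y a b = ∑ i, lam i * t x y a b i := by
      have h := congrArg Complex.re (hp x y a b)
      simpa [Complex.re_sum, Complex.mul_re, ht, mul_comm] using h
    rw [hpx]
    exact tendsto_finset_sum _ fun i _ => (hratio i).mul_const _
  -- membership of the approximants
  have hmem : ∀ m : ℕ, 1 ≤ m → q m ∈ MatTracialPVMCorr k n := by
    intro m hm
    obtain ⟨i0, hi0⟩ : ∃ i, lam i ≠ 0 := by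
      by_contra h; push_neg at h
      rw [Finset.sum_eq_zero (fun i _ => h i)] at hl1; norm_num at hl1
    have hci0 : 1 ≤ c m i0 := by
      have hpos : (0 : ℝ) < lam i0 * m := by
        have h1 := lt_of_le_of_ne (hl0 i0) (Ne.symm hi0)
        have hm0 : (0 : ℝ) < m := by exact_mod_cast hm
        positivity
      refine Nat.one_le_iff_ne_zero.mpr fun h0 => ?_
      rw [hcdef] at h0
      have := Nat.ceil_eq_zero.mp h0
      linarith
    have hNm : 1 ≤ N m :=
      le_trans hci0 (Finset.single_le_sum (f := fun i => c m i)
        (fun i _ => Nat.zero_le _) (Finset.mem_univ i0))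
    have hNmC : ((N m : ℝ) : ℂ) ≠ 0 := by
      have : (N m : ℕ) ≠ 0 := by omega
      exact_mod_cast (Nat.cast_ne_zero (R := ℂ)).mpr this
    have hcard : Fintype.card (Σ i : Fin r, Fin (c m i)) = N m := by
      simp [hNdef]
    set g : Fin (N m) ≃ (Σ i : Fin r, Fin (c m i)) := (Fintype.equivFinOfCardEq hcard).symm
      with hg
    set F : Fin k → Fin n → Matrix (Σ i : Fin r, Fin (c m i)) (Σ i : Fin r, Fin (c m i)) ℂ :=
      fun x a => Matrix.of fun s s' => if (s.2 : ℕ) = (s'.2 : ℕ) then e x a s.1 s'.1 else 0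
      with hF
    -- multiplication of compressed matrices
    have hFmul : ∀ x y a b, F x a * F y b =
        Matrix.of fun s s' => if (s.2 : ℕ) = (s'.2 : ℕ) then (e x a * e y b) s.1 s'.1 else 0 := by
      intro x y a b
      ext ⟨i, tt⟩ ⟨j, u⟩
      rw [Matrix.mul_apply, ← Finset.univ_sigma_univ, Finset.sum_sigma]
      simp only [hF, Matrix.of_apply]
      by_cases htu : (tt : ℕ) = (u : ℕ)
      · rw [if_pos htu, Matrix.mul_apply]
        refine Finset.sum_congr rfl fun l _ => ?_
        by_cases hlt : (tt : ℕ) < c m l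
        · have hsingle : ∀ v : Fin (c m l), v ∈ Finset.univ → v ≠ ⟨(tt : ℕ), hlt⟩ →
              (if (tt : ℕ) = (v : ℕ) then e x a i l else 0) *
                (if (v : ℕ) = (u : ℕ) then e y b l j else 0) = 0 := by
            intro v _ hv
            have hne : ¬((tt : ℕ) = (v : ℕ)) := by
              intro h; exact hv (Fin.ext h.symm)
            rw [if_neg hne, zero_mul]
          rw [Finset.sum_eq_single _ hsingle (fun h => absurd (Finset.mem_univ _) h)]
          simp [htu]
        · have hz : ∀ v : Fin (c m l), v ∈ Finset.univ →
              (if (tt : ℕ) = (v : ℕ) then e x a i l else 0) *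
                (if (v : ℕ) = (u : ℕ) then e y b l j else 0) = 0 := by
            intro v _
            have hne : ¬((tt : ℕ) = (v : ℕ)) := by
              have := v.isLt; omega
            rw [if_neg hne, zero_mul]
          rw [Finset.sum_eq_zero hz]
          have hnel : lam i ≠ lam l := by
            intro h
            have h2 := hcfun m i l h
            have := tt.isLt
            omega
          rw [hcomm x a i l hnel, zero_mul]
      · rw [if_neg htu]
        refine Finset.sum_eq_zero fun l _ => Finset.sum_eq_zero fun v _ => ?_
        by_cases h1 : (tt : ℕ) = (v : ℕ)
        · have h2 : ¬((v : ℕ) = (u : ℕ)) := fun h => htu (h1.trans h)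
          rw [if_neg h2, mul_zero]
        · rw [if_neg h1, zero_mul]
    have hFherm : ∀ x a, (F x a)ᴴ = F x a := by
      intro x a
      ext ⟨i, tt⟩ ⟨j, u⟩
      simp only [Matrix.conjTranspose_apply, hF, Matrix.of_apply]
      by_cases h : (tt : ℕ) = (u : ℕ)
      · rw [if_pos h, if_pos h.symm, ← Matrix.conjTranspose_apply, herm]
      · rw [if_neg h, if_neg (fun h2 => h (h2.symm)), star_zero]
    have hFsum : ∀ x, ∑ a, F x a = 1 := by
      intro x
      ext ⟨i, tt⟩ ⟨j, u⟩
      rw [Matrix.sum_apply]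
      simp only [hF, Matrix.of_apply]
      by_cases h : (tt : ℕ) = (u : ℕ)
      · simp only [if_pos h]
        rw [← Matrix.sum_apply, hsum x]
        by_cases hij : i = j
        · subst hij
          have : tt = u := Fin.ext h
          subst this
          simp [Matrix.one_apply]
        · rw [Matrix.one_apply_ne hij, Matrix.one_apply_ne]
          intro hcon
          exact hij (congrArg Sigma.fst hcon)
      · simp only [if_neg h, Finset.sum_const_zero]
        rw [Matrix.one_apply_ne]
        intro hcon
        apply h
        have h2 := congrArg Sigma.fst hcon
        dsimp at h2
        subst h2
        rw [heq_iff_eq.mp (Sigma.mk.inj_iff.mp hcon).2]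
    have hFidem : ∀ x a, F x a * F x a = F x a := by
      intro x a
      rw [hFmul]
      ext ⟨i, tt⟩ ⟨j, u⟩
      simp only [hF, Matrix.of_apply]
      by_cases h : (tt : ℕ) = (u : ℕ)
      · rw [if_pos h, if_pos h, hproj x a i j (hcpos m j u.pos)]
      · rw [if_neg h, if_neg h]
    have hFtr : ∀ x y a b, (F x a * F y b).trace = ∑ i, (c m i : ℂ) * (e x a * e y b) i i := by
      intro x y a b
      rw [hFmul, Matrix.trace, ← Finset.univ_sigma_univ, Finset.sum_sigma]
      refine Finset.sum_congr rfl fun i _ => ?_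
      simp [Matrix.diag, Finset.sum_const, Finset.card_univ, nsmul_eq_mul]
    have hFreal : ∀ x y a b, (((F x a * F y b).trace.re : ℝ) : ℂ) = (F x a * F y b).trace := by
      intro x y a b
      refine Complex.conj_eq_iff_re.mp ?_
      have h1 : (starRingEnd ℂ) ((F x a * F y b).trace) = ((F x a * F y b)ᴴ).trace := by
        rw [Matrix.trace_conjTranspose]; rfl
      rw [h1, Matrix.conjTranspose_mul, hFherm, hFherm, Matrix.trace_mul_comm]
    refine ⟨N m, hNm, fun x a => (F x a).submatrix g g, ?_, ?_, ?_⟩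
    · intro x a
      constructor
      · rw [Matrix.conjTranspose_submatrix, hFherm]
      · rw [Matrix.submatrix_mul_equiv, hFidem]
    · intro x
      have hsub : ∑ a, (F x a).submatrix g g = (∑ a, F x a).submatrix g g := by
        ext s s'
        simp [Matrix.sum_apply, Matrix.submatrix_apply]
      rw [hsub, hFsum, Matrix.submatrix_one_equiv]
    · intro x y a b
      rw [Matrix.submatrix_mul_equiv]
      have htrsub : ((F x a * F y b).submatrix g g).trace = (F x a * F y b).trace := by
        rw [Matrix.trace, Matrix.trace]
        exact Fintype.sum_equiv g _ _ fun s => rfl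
      rw [htrsub]
      have h1 : q m x y a b = (F x a * F y b).trace.re / (N m : ℝ) := by
        rw [hq]
        have h2 : (F x a * F y b).trace.re = ∑ i, (c m i : ℝ) * t x y a b i := by
          rw [hFtr, Complex.re_sum]
          refine Finset.sum_congr rfl fun i _ => ?_
          simp [Complex.mul_re, ht]
        rw [h2, Finset.sum_div]
        refine Finset.sum_congr rfl fun i _ => ?_
        ring
      rw [h1]
      push_cast
      rw [hFreal]
  -- conclusion
  refine mem_closure_of_tendsto hptend ?_
  filter_upwards [Filter.eventually_ge_atTop 1] with m hm using hmem m hm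


lemma sync_subset_closure {k n : ℕ} :
    {p ∈ QCorr k n | Synchronous p} ⊆ closure (MatTracialPVMCorr k n) := by
  rintro p ⟨⟨dA, dB, A, B, ξ, hA, hB, hxi, hcorr⟩, hsync⟩
  classical
  set X : Matrix (Fin dA) (Fin dB) ℂ := Matrix.of fun i j => ξ (i, j) with hXdef
  have hcorr' : ∀ x y a b, (p x y a b : ℂ) = (A x a * X * (B y b)ᵀ * Xᴴ).trace := by
    intro x y a b; rw [hcorr, ClosureSyncAux.dot_kron]
  have hXX : (X * Xᴴ).trace = 1 := by rw [← ClosureSyncAux.dot_self, hxi]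
  -- synchronicity kills cross terms
  have hzero : ∀ x (a b : Fin n), a ≠ b → A x a * X * (B x b)ᵀ = 0 := by
    intro x a b hab
    obtain ⟨t, _, _, hz⟩ :=
      ClosureSyncAux.psd_trace_conj ((hA x).1 a) (((hB x).1 b).transpose) X
    apply hz
    rw [← hcorr' x x a b, hsync x a b hab, Complex.ofReal_zero]
  -- the intertwining relation
  have hC : ∀ x a, A x a * X = X * (B x a)ᵀ := by
    intro x a
    have hBsum : ∑ b, (B x b)ᵀ = 1 := by
      rw [← Matrix.transpose_sum, (hB x).2, Matrix.transpose_one]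
    have h1 : A x a * X = A x a * X * (B x a)ᵀ := by
      have h2 : A x a * X = ∑ b, A x a * X * (B x b)ᵀ := by
        rw [← Matrix.mul_sum, hBsum, Matrix.mul_one]
      exact h2.trans (Finset.sum_eq_single a (fun b _ hba => hzero x a b (Ne.symm hba))
        (fun h => absurd (Finset.mem_univ _) h))
    have h3 : ∑ b, A x b * X * (B x a)ᵀ = X * (B x a)ᵀ := by
      rw [← Matrix.sum_mul, ← Matrix.sum_mul, (hA x).2, Matrix.one_mul]
    have h4 : ∑ b, A x b * X * (B x a)ᵀ = A x a * X * (B x a)ᵀ :=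
      Finset.sum_eq_single a (fun b _ hba => hzero x b a hba)
        (fun h => absurd (Finset.mem_univ _) h)
    rw [h1, ← h3, h4]
  set M : Matrix (Fin dA) (Fin dA) ℂ := X * Xᴴ with hMdef
  have hMpsd : M.PosSemidef := Matrix.posSemidef_self_mul_conjTranspose X
  have hXB : ∀ x a, A x a * M = X * (B x a)ᵀ * Xᴴ := by
    intro x a; rw [hMdef, ← Matrix.mul_assoc, hC]
  have hherm : ∀ x a, (A x a * M)ᴴ = A x a * M := by
    intro x a
    rw [hXB]
    have h5 : ((B x a)ᵀ)ᴴ = (B x a)ᵀ := by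
      ext i j
      simp only [Matrix.conjTranspose_apply, Matrix.transpose_apply]
      rw [← Matrix.conjTranspose_apply, ((hB x).1 a).1.eq]
    rw [Matrix.conjTranspose_mul, Matrix.conjTranspose_mul, Matrix.conjTranspose_conjTranspose,
      h5, ← Matrix.mul_assoc]
  have hcommM : ∀ x a, A x a * M = M * A x a := by
    intro x a
    have h := hherm x a
    rw [Matrix.conjTranspose_mul, hMpsd.1.eq, ((hA x).1 a).1.eq] at h
    exact h.symm
  have hptrace : ∀ x y a b, (p x y a b : ℂ) = (A x a * A y b * M).trace := by
    intro x y a b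
    rw [hcorr' x y a b]
    have h6 : A x a * X * (B y b)ᵀ * Xᴴ = A x a * A y b * M := by
      rw [Matrix.mul_assoc (A x a) X, ← hC y b, hMdef]
      simp only [Matrix.mul_assoc]
    rw [h6]
  -- (A - A²) M = 0
  have hPpsd : ∀ x a, (A x a - A x a * A x a).PosSemidef := by
    intro x a
    have h1A : ((1 : Matrix (Fin dA) (Fin dA) ℂ) - A x a).PosSemidef := by
      have hsub : (1 : Matrix (Fin dA) (Fin dA) ℂ) - A x a
          = ∑ b ∈ Finset.univ.erase a, A x b := by
        rw [Finset.sum_erase_eq_sub (Finset.mem_univ a), (hA x).2]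
      rw [hsub]
      exact ClosureSyncAux.posSemidef_sum _ _ (fun b _ => (hA x).1 b)
    obtain ⟨S, hs, hSH⟩ := ClosureSyncAux.psd_sqrt ((hA x).1 a)
    have h2 : A x a - A x a * A x a = S * (1 - A x a) * S := by
      rw [Matrix.mul_sub, Matrix.mul_one, Matrix.sub_mul, hs, ← hs]
      simp only [Matrix.mul_assoc]
    have h3 := h1A.mul_mul_conjTranspose_same S
    rw [hSH] at h3
    rw [h2]
    exact h3
  have hE : ∀ x a, (A x a - A x a * A x a) * M = 0 := by
    intro x
    choose t ht0 htr hz using fun a => ClosureSyncAux.psd_trace (hPpsd x a) hMpsd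
    -- total probability 1 on the diagonal
    have htotC : ∑ a, (A x a * A x a * M).trace = 1 := by
      have h7 : ∀ a, (A x a * A x a * M).trace = (p x x a a : ℂ) := fun a => (hptrace x x a a).symm
      rw [Finset.sum_congr rfl (fun a _ => h7 a)]
      have h8 : ∑ a, ∑ b, (p x x a b : ℂ) = 1 := by
        have h9 : ∀ a, ∑ b, (p x x a b : ℂ) = (A x a * M).trace := by
          intro a
          have h10 : ∀ b, (p x x a b : ℂ) = (A x a * X * (B x b)ᵀ * Xᴴ).trace := hcorr' x x a
          rw [Finset.sum_congr rfl (fun b _ => h10 b), ← Matrix.trace_sum]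
          congr 1
          rw [← Matrix.sum_mul, ← Matrix.mul_sum, ← Matrix.transpose_sum, (hB x).2,
            Matrix.transpose_one, Matrix.mul_one, hMdef, Matrix.mul_assoc]
        rw [Finset.sum_congr rfl (fun a _ => h9 a), ← Matrix.trace_sum, ← Matrix.sum_mul,
          (hA x).2, Matrix.one_mul, hXX]
      rw [← h8]
      refine Finset.sum_congr rfl fun a _ => ?_
      rw [Finset.sum_eq_single a (fun b _ hba => by
        rw [hsync x a b (Ne.symm hba), Complex.ofReal_zero])
        (fun h => absurd (Finset.mem_univ _) h)]
    have htotA : ∑ a, (A x a * M).trace = 1 := by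
      rw [← Matrix.trace_sum, ← Matrix.sum_mul, (hA x).2, Matrix.one_mul, hXX]
    have hsum0 : ∑ a, ((A x a - A x a * A x a) * M).trace = 0 := by
      have h11 : ∀ a, ((A x a - A x a * A x a) * M).trace
          = (A x a * M).trace - (A x a * A x a * M).trace := by
        intro a
        rw [Matrix.sub_mul, Matrix.trace_sub]
      rw [Finset.sum_congr rfl (fun a _ => h11 a), Finset.sum_sub_distrib, htotA, htotC, sub_self]
    have hsum0' : ∑ a, t a = 0 := by
      have h12 : ∑ a, ((A x a - A x a * A x a) * M).trace = ((∑ a, t a : ℝ) : ℂ) := by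
        rw [Finset.sum_congr rfl (fun a _ => htr a)]
        push_cast; rfl
      rw [h12] at hsum0
      exact_mod_cast hsum0
    intro a
    apply hz a
    rw [htr a]
    have h13 : t a = 0 :=
      (Finset.sum_eq_zero_iff_of_nonneg (fun a _ => ht0 a)).mp hsum0' a (Finset.mem_univ a)
    rw [h13, Complex.ofReal_zero]
  -- spectral decomposition of M
  have hMH : M.IsHermitian := hMpsd.1
  set U : Matrix (Fin dA) (Fin dA) ℂ := (hMH.eigenvectorUnitary : Matrix (Fin dA) (Fin dA) ℂ)
    with hUdef
  set lam : Fin dA → ℝ := hMH.eigenvalues with hlamdef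
  have hUU : star U * U = 1 := Matrix.mem_unitaryGroup_iff'.mp hMH.eigenvectorUnitary.2
  have hUstar : U * star U = 1 := Matrix.mem_unitaryGroup_iff.mp hMH.eigenvectorUnitary.2
  set D : Matrix (Fin dA) (Fin dA) ℂ := Matrix.diagonal (fun i => (lam i : ℂ)) with hDdef
  have hdiag : star U * M * U = D := by
    rw [hDdef, hlamdef]
    have := hMH.conjStarAlgAut_star_eigenvectorUnitary
    rw [Unitary.conjStarAlgAut_star_apply] at this
    exact this
  have hU3 : ∀ T : Matrix (Fin dA) (Fin dA) ℂ, U * (star U * T) = T := by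
    intro T; rw [← Matrix.mul_assoc, hUstar, Matrix.one_mul]
  set e : Fin k → Fin n → Matrix (Fin dA) (Fin dA) ℂ := fun x a => star U * A x a * U with hedef
  have h7 : ∀ Z W : Matrix (Fin dA) (Fin dA) ℂ,
      (star U * Z * U) * (star U * W * U) = star U * (Z * W) * U := by
    intro Z W
    simp only [Matrix.mul_assoc]
    rw [hU3]
  -- apply key
  apply key p lam e
  · exact fun i => hMpsd.eigenvalues_nonneg i
  · -- sum of eigenvalues = 1
    have h14 : D.trace = 1 := by
      rw [← hdiag, Matrix.mul_assoc, Matrix.trace_mul_comm, Matrix.mul_assoc, hUstar,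
        Matrix.mul_one, hXX]
    rw [hDdef, Matrix.trace_diagonal] at h14
    have : ((∑ i, lam i : ℝ) : ℂ) = 1 := by push_cast at h14 ⊢; exact h14
    exact_mod_cast this
  · intro x a
    simp only [hedef, Matrix.conjTranspose_mul, Matrix.star_eq_conjTranspose,
      Matrix.conjTranspose_conjTranspose, ((hA x).1 a).1.eq, Matrix.mul_assoc]
  · intro x
    simp only [hedef]
    rw [← Matrix.sum_mul, ← Matrix.mul_sum, (hA x).2, Matrix.mul_one, hUU]
  · -- entrywise commutation with D
    intro x a i j hne
    have hcomm' : e x a * D = D * e x a := by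
      rw [← hdiag]
      simp only [hedef]
      rw [h7, h7, hcommM]
    have h8 := congrArg (fun Z => Z i j) hcomm'
    simp only [hDdef, Matrix.mul_diagonal, Matrix.diagonal_mul] at h8
    have h9 : ((lam j : ℂ) - (lam i : ℂ)) * e x a i j = 0 := by linear_combination h8
    rcases mul_eq_zero.mp h9 with h | h
    · exfalso
      apply hne
      have : (lam j : ℂ) = (lam i : ℂ) := by linear_combination h
      exact_mod_cast this.symm
    · exact h
  · -- entrywise projection property on the support
    intro x a i j hj
    have h10 : (e x a * e x a - e x a) * D = 0 := by
      rw [← hdiag]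
      simp only [hedef]
      rw [h7]
      have h11 : star U * (A x a * A x a) * U - star U * A x a * U
          = star U * (A x a * A x a - A x a) * U := by
        rw [Matrix.mul_sub, Matrix.sub_mul]
      rw [h11, h7]
      have h12 : (A x a * A x a - A x a) * M = 0 := by
        have h13 := hE x a
        have : (A x a * A x a - A x a) = -(A x a - A x a * A x a) := (neg_sub _ _).symm
        rw [this, Matrix.neg_mul, h13, neg_zero]
      rw [h12, Matrix.mul_zero, Matrix.zero_mul]
    have h14 : ((e x a * e x a - e x a) i j) * (lam j : ℂ) = 0 := by
      have h14' := congrArg (fun Z => Z i j) h10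
      simpa [hDdef, Matrix.mul_diagonal] using h14'
    have hjC : (lam j : ℂ) ≠ 0 := by exact_mod_cast hj
    rcases mul_eq_zero.mp h14 with h | h
    · rw [Matrix.sub_apply] at h
      exact sub_eq_zero.mp h
    · exact absurd h hjC
  · -- the trace formula
    intro x y a b
    have h16 : e x a * e y b * D = star U * (A x a * A y b * M) * U := by
      rw [← hdiag]
      simp only [hedef]
      rw [h7, h7]
    have h17 : (e x a * e y b * D).trace = (A x a * A y b * M).trace := by
      rw [h16, Matrix.mul_assoc, Matrix.trace_mul_comm, Matrix.mul_assoc, hUstar,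
        Matrix.mul_one]
    have h18 : (e x a * e y b * D).trace = ∑ i, (e x a * e y b) i i * (lam i : ℂ) := by
      rw [Matrix.trace]
      refine Finset.sum_congr rfl fun i _ => ?_
      simp [Matrix.diag, hDdef, Matrix.mul_diagonal]
    rw [hptrace x y a b, ← h17, h18]


/-- For all `k, n ≥ 2`, the closure of the set `C^s_q(k,n)` of synchronous quantum
correlations equals the closure of the set of matrix tracial PVM correlations. -/
theorem closure_sync_q_eq_closure_matrix_tracial_pvm (k n : ℕ) (hk : 2 ≤ k) (hn : 2 ≤ n) :
    closure { p ∈ QCorr k n | Synchronous p } = closure (MatTracialPVMCorr k n) :=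
  Set.Subset.antisymm (closure_minimal sync_subset_closure isClosed_closure)
    (closure_mono (matTracial_subset k n))

end
end
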